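/- Let f : X → ℝ and h : X → ℝ be differentiable, with m·I ⪯ ∇²h ⪯ M·I for 0 < m ≤ M. For any step size η > 0, the proximal Bregman update x_{k+1} = argmin_x { f(x) + (1/η) D_h(x, x_k) } satisfies f(x_{k+1}) - f(x_k) ≤ -(mη/(2M²)) ‖∇f(x_{k+1})‖². -/

import Mathlib

open Real RealInnerProductSpace

section AuxLemmas

variable {X : Type*} [NormedAddCommGroup X] [InnerProductSpace ℝ X] [FiniteDimensional ℝ X]

lemma grad_fderiv_symm (h : X → ℝ) (hhd : Differentiable ℝ h)
    (hhd2 : Differentiable ℝ (gradient h)) (x u w : X) :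
    ⟪(fderiv ℝ (gradient h) x) u, w⟫ = ⟪(fderiv ℝ (gradient h) x) w, u⟫ := by
  set D := InnerProductSpace.toDual ℝ X with hD
  have hf' : ∀ y, HasFDerivAt h (D (gradient h y)) y :=
    fun y => (hhd y).hasGradientAt.hasFDerivAt
  have hA : HasFDerivAt (gradient h) (fderiv ℝ (gradient h) x) x := (hhd2 x).hasFDerivAt
  have hDf : HasFDerivAt (fun y => D (gradient h y))
      ((D.toContinuousLinearEquiv.toContinuousLinearMap).comp (fderiv ℝ (gradient h) x)) x :=
    (D.toContinuousLinearEquiv.toContinuousLinearMap.hasFDerivAt).comp x hA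
  have := second_derivative_symmetric hf' hDf u w
  simpa [hD, InnerProductSpace.toDual_apply_apply] using this

lemma grad_fderiv_bound (h : X → ℝ) (hhd : Differentiable ℝ h)
    (hhd2 : Differentiable ℝ (gradient h)) (m M : ℝ) (hm : 0 < m) (hmM : m ≤ M)
    (hhm : ∀ x v : X, m * ‖v‖ ^ 2 ≤ ⟪(fderiv ℝ (gradient h) x) v, v⟫)
    (hhM : ∀ x v : X, ⟪(fderiv ℝ (gradient h) x) v, v⟫ ≤ M * ‖v‖ ^ 2)
    (x u w : X) :
    ⟪(fderiv ℝ (gradient h) x) u, w⟫ ≤ M * ‖u‖ * ‖w‖ := by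
  have hsymm := grad_fderiv_symm h hhd hhd2 x u w
  have hquad : ∀ t : ℝ, 0 ≤ ⟪(fderiv ℝ (gradient h) x) w, w⟫ * (t * t)
      + (2 * ⟪(fderiv ℝ (gradient h) x) u, w⟫) * t + ⟪(fderiv ℝ (gradient h) x) u, u⟫ := by
    intro t
    have h0 : (0:ℝ) ≤ m * ‖u + t • w‖ ^ 2 := by positivity
    have h1 := hhm x (u + t • w)
    have h2 : ⟪(fderiv ℝ (gradient h) x) (u + t • w), u + t • w⟫
        = ⟪(fderiv ℝ (gradient h) x) u, u⟫ + t * ⟪(fderiv ℝ (gradient h) x) u, w⟫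
          + t * ⟪(fderiv ℝ (gradient h) x) w, u⟫
          + (t * t) * ⟪(fderiv ℝ (gradient h) x) w, w⟫ := by
      simp [map_add, map_smul, inner_add_left, inner_add_right, real_inner_smul_left,
        real_inner_smul_right]
      ring
    rw [← hsymm] at h2
    nlinarith [h0.trans h1]
  have hd := discrim_le_zero hquad
  rw [discrim] at hd
  have hMw := hhM x w
  have hMu := hhM x u
  have hnu : 0 ≤ ⟪(fderiv ℝ (gradient h) x) u, u⟫ := le_trans (by positivity) (hhm x u)
  have hnw : 0 ≤ ⟪(fderiv ℝ (gradient h) x) w, w⟫ := le_trans (by positivity) (hhm x w)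
  have hsq : ⟪(fderiv ℝ (gradient h) x) u, w⟫ ^ 2 ≤ (M * ‖u‖ * ‖w‖) ^ 2 := by
    have h3 : ⟪(fderiv ℝ (gradient h) x) u, w⟫ ^ 2
        ≤ ⟪(fderiv ℝ (gradient h) x) w, w⟫ * ⟪(fderiv ℝ (gradient h) x) u, u⟫ := by nlinarith
    calc ⟪(fderiv ℝ (gradient h) x) u, w⟫ ^ 2
        ≤ ⟪(fderiv ℝ (gradient h) x) w, w⟫ * ⟪(fderiv ℝ (gradient h) x) u, u⟫ := h3
      _ ≤ (M * ‖w‖ ^ 2) * (M * ‖u‖ ^ 2) :=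
          mul_le_mul hMw hMu hnu (le_trans (by positivity) hMw)
      _ = (M * ‖u‖ * ‖w‖) ^ 2 := by ring
  have hM : 0 < M := lt_of_lt_of_le hm hmM
  have hpos : (0:ℝ) ≤ M * ‖u‖ * ‖w‖ := by positivity
  nlinarith [hsq, hpos]

end AuxLemmas

/-- The Bregman divergence of `h`. -/
noncomputable def bregmanDiv {X : Type*} [NormedAddCommGroup X] [InnerProductSpace ℝ X]
    [CompleteSpace X] (h : X → ℝ) (x y : X) : ℝ :=
  h x - h y - ⟪gradient h y, x - y⟫

theorem proximal_bregman_progress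
    {X : Type*} [NormedAddCommGroup X] [InnerProductSpace ℝ X] [FiniteDimensional ℝ X]
    (f h : X → ℝ)
    (hfd : Differentiable ℝ f)
    (hhd : Differentiable ℝ h) (hhd2 : Differentiable ℝ (gradient h))
    (m M η : ℝ) (hm : 0 < m) (hmM : m ≤ M) (hη : 0 < η)
    (hhm : ∀ x v : X, m * ‖v‖ ^ 2 ≤ ⟪(fderiv ℝ (gradient h) x) v, v⟫)
    (hhM : ∀ x v : X, ⟪(fderiv ℝ (gradient h) x) v, v⟫ ≤ M * ‖v‖ ^ 2)
    (xk x1 : X)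
    (hopt : ∀ z : X, f x1 + (1 / η) * bregmanDiv h x1 xk ≤ f z + (1 / η) * bregmanDiv h z xk) :
    f x1 - f xk ≤ -(m * η / (2 * M ^ 2)) * ‖gradient f x1‖ ^ 2 := by
  have hM : 0 < M := lt_of_lt_of_le hm hmM
  set v := x1 - xk with hv
  -- derivative facts along the segment xk + t • v
  have hc : ∀ t : ℝ, HasDerivAt (fun s : ℝ => xk + s • v) v t := by
    intro t
    simpa using ((hasDerivAt_id t).smul_const v).const_add xk
  have hgradc : ∀ t : ℝ, HasDerivAt (fun s : ℝ => gradient h (xk + s • v))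
      ((fderiv ℝ (gradient h) (xk + t • v)) v) t := by
    intro t
    exact ((hhd2 (xk + t • v)).hasFDerivAt).comp_hasDerivAt t (hc t)
  have hhc : ∀ t : ℝ, HasDerivAt (fun s : ℝ => h (xk + s • v))
      ⟪gradient h (xk + t • v), v⟫ t := by
    intro t
    have := ((hhd (xk + t • v)).hasGradientAt.hasFDerivAt).comp_hasDerivAt t (hc t)
    simpa [InnerProductSpace.toDual_apply_apply, Function.comp_def] using this
  have hinner : ∀ (w : X) (t : ℝ), HasDerivAt (fun s : ℝ => ⟪gradient h (xk + s • v), w⟫)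
      ⟪(fderiv ℝ (gradient h) (xk + t • v)) v, w⟫ t := by
    intro w t
    simpa using HasDerivAt.inner ℝ (hgradc t) (hasDerivAt_const t w)
  have hc0 : xk + (0:ℝ) • v = xk := by simp
  have hc1 : xk + (1:ℝ) • v = x1 := by simp [hv]
  -- Step A: strong convexity of h gives a lower bound on the Bregman divergence.
  have hq : ∀ t : ℝ, HasDerivAt
      (fun s : ℝ => ⟪gradient h (xk + s • v), v⟫ - m * s * ‖v‖ ^ 2)
      (⟪(fderiv ℝ (gradient h) (xk + t • v)) v, v⟫ - m * ‖v‖ ^ 2) t := by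
    intro t
    have h2 : HasDerivAt (fun s : ℝ => m * s * ‖v‖ ^ 2) (m * ‖v‖ ^ 2) t := by
      simpa using ((hasDerivAt_id t).const_mul m).mul_const (‖v‖ ^ 2)
    exact (hinner v t).sub h2
  have hqmono : Monotone (fun s : ℝ => ⟪gradient h (xk + s • v), v⟫ - m * s * ‖v‖ ^ 2) :=
    monotone_of_deriv_nonneg (fun t => (hq t).differentiableAt)
      (fun t => by rw [(hq t).deriv]; have := hhm (xk + t • v) v; linarith)
  have hq1 : ∀ t : ℝ, 0 ≤ t →
      ⟪gradient h xk, v⟫ + m * t * ‖v‖ ^ 2 ≤ ⟪gradient h (xk + t • v), v⟫ := by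
    intro t ht
    have h01 := hqmono ht
    simp only [hc0, mul_zero, zero_mul, sub_zero] at h01
    linarith
  have hr : ∀ t : ℝ, HasDerivAt
      (fun s : ℝ => h (xk + s • v) - s * ⟪gradient h xk, v⟫ - m / 2 * s ^ 2 * ‖v‖ ^ 2)
      (⟪gradient h (xk + t • v), v⟫ - ⟪gradient h xk, v⟫ - m * t * ‖v‖ ^ 2) t := by
    intro t
    have h1 : HasDerivAt (fun s : ℝ => s * ⟪gradient h xk, v⟫) ⟪gradient h xk, v⟫ t := by
      simpa using (hasDerivAt_id t).mul_const ⟪gradient h xk, v⟫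
    have h2 : HasDerivAt (fun s : ℝ => m / 2 * s ^ 2 * ‖v‖ ^ 2) (m * t * ‖v‖ ^ 2) t := by
      have := ((hasDerivAt_pow 2 t).const_mul (m / 2)).mul_const (‖v‖ ^ 2)
      refine this.congr_deriv ?_
      rw [show (2:ℕ) - 1 = 1 from rfl]
      push_cast
      ring
    exact ((hhc t).sub h1).sub h2
  have hrmono : MonotoneOn
      (fun s : ℝ => h (xk + s • v) - s * ⟪gradient h xk, v⟫ - m / 2 * s ^ 2 * ‖v‖ ^ 2)
      (Set.Ici 0) := by
    apply monotoneOn_of_deriv_nonneg (convex_Ici 0)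
    · exact (Differentiable.continuous (fun t => (hr t).differentiableAt)).continuousOn
    · exact fun t _ => ((hr t).differentiableAt).differentiableWithinAt
    · intro t ht
      rw [interior_Ici] at ht
      rw [(hr t).deriv]
      have := hq1 t (le_of_lt ht)
      linarith
  have hA : m / 2 * ‖v‖ ^ 2 ≤ bregmanDiv h x1 xk := by
    have h01 := hrmono Set.self_mem_Ici (Set.mem_Ici.mpr zero_le_one) zero_le_one
    simp only [hc0, hc1, zero_mul, mul_zero, one_mul, mul_one, one_pow, sub_zero,
      ne_eq, OfNat.ofNat_ne_zero, not_false_eq_true, zero_pow] at h01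
    rw [bregmanDiv, ← hv]
    linarith
  -- Step B: Lipschitz bound on the gradient of h.
  have hBnd : ‖gradient h x1 - gradient h xk‖ ≤ M * ‖v‖ := by
    set w := gradient h x1 - gradient h xk with hw
    have hs : ∀ t : ℝ, HasDerivAt
        (fun s : ℝ => M * ‖v‖ * ‖w‖ * s - ⟪gradient h (xk + s • v), w⟫)
        (M * ‖v‖ * ‖w‖ - ⟪(fderiv ℝ (gradient h) (xk + t • v)) v, w⟫) t := by
      intro t
      have h1 : HasDerivAt (fun s : ℝ => M * ‖v‖ * ‖w‖ * s) (M * ‖v‖ * ‖w‖) t := by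
        simpa using (hasDerivAt_id t).const_mul (M * ‖v‖ * ‖w‖)
      exact h1.sub (hinner w t)
    have hmono : Monotone (fun s : ℝ => M * ‖v‖ * ‖w‖ * s - ⟪gradient h (xk + s • v), w⟫) :=
      monotone_of_deriv_nonneg (fun t => (hs t).differentiableAt)
        (fun t => by
          rw [(hs t).deriv]
          have := grad_fderiv_bound h hhd hhd2 m M hm hmM hhm hhM (xk + t • v) v w
          linarith)
    have h01 := hmono zero_le_one
    simp only [hc0, hc1, mul_zero, zero_mul, zero_sub, mul_one] at h01
    have hin : ⟪w, w⟫ ≤ M * ‖v‖ * ‖w‖ := by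
      rw [hw, inner_sub_left]
      linarith
    have hsq : ‖w‖ ^ 2 ≤ M * ‖v‖ * ‖w‖ := by
      rw [← real_inner_self_eq_norm_sq]
      exact hin
    rcases eq_or_lt_of_le (norm_nonneg w) with h0 | h0
    · rw [← h0]; positivity
    · nlinarith [hsq, h0]
  -- Step C: first-order optimality condition.
  have hgf : HasFDerivAt f (InnerProductSpace.toDual ℝ X (gradient f x1)) x1 :=
    (hfd x1).hasGradientAt.hasFDerivAt
  have hgh : HasFDerivAt h (InnerProductSpace.toDual ℝ X (gradient h x1)) x1 :=
    (hhd x1).hasGradientAt.hasFDerivAt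
  have hlin : HasFDerivAt (fun z : X => ⟪gradient h xk, z - xk⟫)
      (innerSL ℝ (gradient h xk)) x1 := by
    have h0 := ((innerSL ℝ (gradient h xk)).hasFDerivAt (x := x1)).sub_const
      ⟪gradient h xk, xk⟫
    exact h0.congr_of_eventuallyEq (Filter.Eventually.of_forall fun z => by
      simp [inner_sub_right])
  have hbreg : HasFDerivAt (fun z : X => bregmanDiv h z xk)
      (InnerProductSpace.toDual ℝ X (gradient h x1) - innerSL ℝ (gradient h xk)) x1 := by
    have := (hgh.sub_const (h xk)).sub hlin
    simpa [bregmanDiv, Pi.sub_def] using this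
  have hFd : HasFDerivAt (fun z : X => f z + (1 / η) * bregmanDiv h z xk)
      (InnerProductSpace.toDual ℝ X (gradient f x1)
        + (1 / η) • (InnerProductSpace.toDual ℝ X (gradient h x1)
          - innerSL ℝ (gradient h xk))) x1 :=
    hgf.add (hbreg.const_mul (1 / η))
  have hloc : IsLocalMin (fun z : X => f z + (1 / η) * bregmanDiv h z xk) x1 :=
    Filter.Eventually.of_forall fun z => hopt z
  have hzero := hloc.fderiv_eq_zero
  rw [hFd.fderiv] at hzero
  have hkey : η • gradient f x1 = gradient h xk - gradient h x1 := by
    have hwz : ∀ y : X,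
        ⟪η • gradient f x1 - (gradient h xk - gradient h x1), y⟫ = 0 := by
      intro y
      have happ := congrArg (fun L : X →L[ℝ] ℝ => L y) hzero
      simp only [ContinuousLinearMap.add_apply, ContinuousLinearMap.coe_smul',
        Pi.smul_apply, ContinuousLinearMap.sub_apply, ContinuousLinearMap.zero_apply,
        InnerProductSpace.toDual_apply_apply, innerSL_apply_apply, smul_eq_mul] at happ
      rw [inner_sub_left, inner_sub_left, real_inner_smul_left]
      have hη' : η ≠ 0 := ne_of_gt hη
      field_simp at happ
      linarith
    have h0 := hwz (η • gradient f x1 - (gradient h xk - gradient h x1))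
    rw [inner_self_eq_zero] at h0
    exact sub_eq_zero.mp h0
  have hnorm : η * ‖gradient f x1‖ ≤ M * ‖v‖ := by
    have h1 : ‖η • gradient f x1‖ = η * ‖gradient f x1‖ := by
      rw [norm_smul, Real.norm_eq_abs, abs_of_pos hη]
    calc η * ‖gradient f x1‖ = ‖η • gradient f x1‖ := h1.symm
      _ = ‖gradient h xk - gradient h x1‖ := by rw [hkey]
      _ = ‖gradient h x1 - gradient h xk‖ := norm_sub_rev _ _
      _ ≤ M * ‖v‖ := hBnd
  -- Combine everything.
  have hself : bregmanDiv h xk xk = 0 := by simp [bregmanDiv]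
  have hstep : f x1 + (1 / η) * bregmanDiv h x1 xk ≤ f xk := by
    have := hopt xk
    rw [hself, mul_zero, add_zero] at this
    exact this
  have h2 : η ^ 2 * ‖gradient f x1‖ ^ 2 ≤ M ^ 2 * ‖v‖ ^ 2 := by
    have := mul_le_mul hnorm hnorm (by positivity) (by positivity : (0:ℝ) ≤ M * ‖v‖)
    nlinarith [this]
  have h3' : m * η ^ 2 * ‖gradient f x1‖ ^ 2 ≤ 2 * M ^ 2 * bregmanDiv h x1 xk := by
    nlinarith [mul_le_mul_of_nonneg_left h2 hm.le,
      mul_le_mul_of_nonneg_left hA (by positivity : (0:ℝ) ≤ 2 * M ^ 2)]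
  have hη' : η ≠ 0 := ne_of_gt hη
  have hM' : M ≠ 0 := ne_of_gt hM
  have h3 : (m * η * ‖gradient f x1‖ ^ 2) / (2 * M ^ 2) ≤ bregmanDiv h x1 xk / η := by
    rw [div_le_div_iff₀ (by positivity) hη]
    linarith [h3']
  have e1 : -(m * η / (2 * M ^ 2)) * ‖gradient f x1‖ ^ 2
      = -(m * η * ‖gradient f x1‖ ^ 2 / (2 * M ^ 2)) := by ring
  have e2 : (1 / η) * bregmanDiv h x1 xk = bregmanDiv h x1 xk / η := by ring
  rw [e1]
  rw [e2] at hstep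
  linarith [hstep, h3]
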